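/- The expected age is strictly increasing in the threshold: for every integer s with 1 ≤ s ≤ M−2, A(s) < A(s+1). -/

import Mathlib

open Finset

/-- Expected age of the threshold-`s` aging-control policy: the mean of the
stationary age distribution of the threshold-`s` chain. -/
noncomputable def Aage (M : ℕ) (p : ℝ) (s : ℕ) : ℝ :=
  ((s : ℝ) + (1 - p) / p)⁻¹ *
    ((∑ i ∈ Finset.Icc 1 s, (i : ℝ))
      + (∑ i ∈ Finset.Icc (s + 1) (M - 1), (i : ℝ) * (1 - p) ^ (i - s))
      + (M : ℝ) * (1 - p) ^ (M - s) / p)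

private lemma gaussIcc : ∀ s : ℕ, (∑ i ∈ Finset.Icc 1 s, (i : ℝ)) = s * (s + 1) / 2
  | 0 => by simp
  | (n + 1) => by
      rw [Finset.sum_Icc_succ_top (by omega), gaussIcc n]
      push_cast; ring

private lemma closedC (p : ℝ) (s : ℕ) : ∀ m : ℕ,
    p * (p * (∑ i ∈ Finset.Icc (s + 1) (s + m), (i : ℝ) * (1 - p) ^ (i - s))
        + ((s : ℝ) + m + 1) * (1 - p) ^ (m + 1))
      = (s : ℝ) * (1 - p) * p + (1 - p) - (1 - p) ^ (m + 2)
  | 0 => by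
      rw [show s + 0 = s from rfl, Finset.Icc_eq_empty (by omega)]
      simp only [Finset.sum_empty, Nat.cast_zero]
      ring
  | (m + 1) => by
      have ih := closedC p s m
      rw [show s + (m + 1) = (s + m) + 1 from rfl,
          Finset.sum_Icc_succ_top (by omega : s + 1 ≤ s + m + 1),
          show (s + m + 1) - s = m + 1 by omega]
      push_cast
      push_cast at ih
      linear_combination ih

private lemma key' (s p u C0 C1 : ℝ) (hs : 1 ≤ s) (hp : 0 < p) (hq : 0 < 1 - p)
    (hu : p * u = 1 - p) (hupos : 0 < u)
    (f1 : C0 = (1 - p) * C1 + (s + 1) * (1 - p))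
    (f2 : (s + 1) * (1 - p) ≤ p * C0) :
    (s + u)⁻¹ * (s * (s + 1) / 2 + C0) <
      (s + 1 + u)⁻¹ * (s * (s + 1) / 2 + (s + 1) + C1) := by
  have hD0 : 0 < s + u := by linarith
  have hD1 : 0 < s + 1 + u := by linarith
  rw [inv_mul_eq_div, inv_mul_eq_div, div_lt_div_iff₀ hD0 hD1]
  have hs0 : (0 : ℝ) ≤ s := by linarith
  have h2 : (1 - p) * (s * (s + 1) / 2) < p * s * C0 := by
    nlinarith [mul_le_mul_of_nonneg_left f2 hs0,
      mul_pos hq (mul_pos (show (0:ℝ) < s by linarith) (show (0:ℝ) < s + 1 by linarith))]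
  have key : (1 - p) * ((s * (s + 1) / 2 + (s + 1) + C1) * (s + u)
      - (s * (s + 1) / 2 + C0) * (s + 1 + u))
      = p * s * C0 - (1 - p) * (s * (s + 1) / 2) := by
    linear_combination (-(s + u)) * f1 + C0 * hu
  have h3 : 0 < (1 - p) * ((s * (s + 1) / 2 + (s + 1) + C1) * (s + u)
      - (s * (s + 1) / 2 + C0) * (s + 1 + u)) := by
    rw [key]; linarith
  rcases mul_pos_iff.1 h3 with ⟨_, hX⟩ | ⟨hc, _⟩
  · linarith
  · linarith

/-- The expected age is strictly increasing in the threshold. -/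
theorem expected_age_strict_mono (M s : ℕ) (p : ℝ)
    (hM : 2 ≤ M) (hp : 0 < p) (hp1 : p < 1)
    (hs1 : 1 ≤ s) (hsM : s ≤ M - 2) :
    Aage M p s < Aage M p (s + 1) := by
  obtain ⟨t, rfl⟩ : ∃ t, M = s + 2 + t := ⟨M - 2 - s, by omega⟩
  have hp' : p ≠ 0 := ne_of_gt hp
  have hq : 0 < 1 - p := by linarith
  have hs' : (1 : ℝ) ≤ (s : ℝ) := by exact_mod_cast hs1
  unfold Aage
  rw [show s + 2 + t - 1 = s + 1 + t by omega,
      show s + 2 + t - s = t + 2 by omega,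
      show s + 2 + t - (s + 1) = t + 1 by omega]
  push_cast
  -- closed forms
  have hc0 := closedC p s (t + 1)
  rw [show s + (t + 1) = s + 1 + t by omega] at hc0
  push_cast at hc0
  have hc1 := closedC p (s + 1) t
  push_cast at hc1
  set S0 : ℝ := ∑ i ∈ Finset.Icc (s + 1) (s + 1 + t), (i : ℝ) * (1 - p) ^ (i - s) with hS0
  set S1 : ℝ := ∑ i ∈ Finset.Icc (s + 1 + 1) (s + 1 + t), (i : ℝ) * (1 - p) ^ (i - (s + 1)) with hS1
  set C0 : ℝ := S0 + ((s : ℝ) + 2 + t) * (1 - p) ^ (t + 2) / p with hC0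
  set C1 : ℝ := S1 + ((s : ℝ) + 2 + t) * (1 - p) ^ (t + 1) / p with hC1
  have e0 : p * (p * C0) = (s : ℝ) * (1 - p) * p + (1 - p) - (1 - p) ^ (t + 3) := by
    have hG : p * (((s : ℝ) + 2 + t) * (1 - p) ^ (t + 2) / p)
        = ((s : ℝ) + 2 + t) * (1 - p) ^ (t + 2) := by field_simp
    rw [hC0]
    linear_combination hc0 + p * hG
  have e1 : p * (p * C1) = ((s : ℝ) + 1) * (1 - p) * p + (1 - p) - (1 - p) ^ (t + 2) := by
    have hG : p * (((s : ℝ) + 2 + t) * (1 - p) ^ (t + 1) / p)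
        = ((s : ℝ) + 2 + t) * (1 - p) ^ (t + 1) := by field_simp
    rw [hC1]
    linear_combination hc1 + p * hG
  have f1 : C0 = (1 - p) * C1 + ((s : ℝ) + 1) * (1 - p) := by
    have h2 : p * (p * C0) = p * (p * ((1 - p) * C1 + ((s : ℝ) + 1) * (1 - p))) := by
      linear_combination e0 - (1 - p) * e1
    exact mul_left_cancel₀ hp' (mul_left_cancel₀ hp' h2)
  have f2 : ((s : ℝ) + 1) * (1 - p) ≤ p * C0 := by
    have hpow : (1 - p) ^ (t + 3) ≤ (1 - p) ^ 2 :=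
      pow_le_pow_of_le_one (by linarith) (by linarith) (by omega)
    nlinarith [e0, hpow, hp]
  have hu : p * ((1 - p) / p) = 1 - p := by field_simp
  have hupos : 0 < (1 - p) / p := div_pos hq hp
  have main := key' (s : ℝ) p ((1 - p) / p) C0 C1 hs' hp hq hu hupos f1 f2
  convert main using 2
  · rw [gaussIcc, hC0]
    ring
  · rw [gaussIcc]
    push_cast
    ring
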